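/- Let V and W be categories with coproducts, W cocomplete, J a small connected category, and F : J → [GV, GW] a functor sending objects and arrows of J to functors and natural transformations over Set. Then the colimit K of F may be chosen to be over Set; moreover if each Fj is path-like then K is path-like, and if each Fj is distributive then K is distributive. -/

import Mathlib

open CategoryTheory Limits

universe v u w

/-- A `V`-enriched graph: a type of objects together with a hom-object of `V`
for each ordered pair of objects. -/
structure EGraph (V : Type u) [Category.{v} V] : Type (max u (v + 1)) where
  obj : Type v
  hom : obj → obj → V

namespace EGraph

variable {V : Type u} [Category.{v} V] {W : Type w} [Category.{v} W]

/-- Morphisms of enriched graphs. -/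
structure Hom (X Y : EGraph V) : Type (max u v) where
  f : X.obj → Y.obj
  φ : ∀ a b : X.obj, X.hom a b ⟶ Y.hom (f a) (f b)

theorem Hom.ext' {X Y : EGraph V} {F G : Hom X Y} (h : F.f = G.f)
    (h2 : HEq F.φ G.φ) : F = G := by
  cases F; cases G; cases h; cases h2; rfl

instance : Category (EGraph V) where
  Hom := Hom
  id X := ⟨_root_.id, fun a b => 𝟙 _⟩
  comp F G := ⟨G.f ∘ F.f, fun a b => F.φ a b ≫ G.φ _ _⟩
  id_comp F := Hom.ext' rfl (heq_of_eq (by funext a b; exact Category.id_comp _))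
  comp_id F := Hom.ext' rfl (heq_of_eq (by funext a b; exact Category.comp_id _))
  assoc F G H := Hom.ext' rfl (heq_of_eq (by funext a b; exact Category.assoc _ _ _))

/-- The functor `G V ⥤ G W` induced by a functor `V ⥤ W`, applying it to all homs. -/
def mapG (R : V ⥤ W) : EGraph V ⥤ EGraph W where
  obj X := ⟨X.obj, fun a b => R.obj (X.hom a b)⟩
  map F := ⟨F.f, fun a b => R.map (F.φ a b)⟩
  map_id X := Hom.ext' rfl (heq_of_eq (by funext a b; exact R.map_id _))
  map_comp F G := Hom.ext' rfl (heq_of_eq (by funext a b; exact R.map_comp _ _))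

/-- A functor between categories of enriched graphs is *over `Set`* when it commutes
with the object-set functors. -/
def OverSet (T : EGraph V ⥤ EGraph W) : Prop :=
  (∀ X : EGraph V, (T.obj X).obj = X.obj) ∧
    ∀ {X Y : EGraph V} (F : X ⟶ Y), HEq (T.map F).f (Hom.f F)

theorem cast_apply_heq {α α' : Type v} {β β' : Type v} (hα : α = α') (hβ : β = β')
    {f : α → β} {g : α' → β'} (h : HEq f g) (p : α) :
    f p = cast hβ.symm (g (cast hα p)) := by
  subst hα; subst hβ; cases h; simp

theorem map_f_eq (T : EGraph V ⥤ EGraph W) (hT : OverSet T) {X Y : EGraph V}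
    (F : X ⟶ Y) (p : X.obj) :
    (T.map F).f (cast (hT.1 X).symm p) = cast (hT.1 Y).symm (F.f p) := by
  rw [cast_apply_heq (hT.1 X) (hT.1 Y) (hT.2 F)]
  congr 2
  simp

variable [HasInitial V]

noncomputable section

/-- The `V`-graph `(X₁,…,Xₙ)` on objects `{0,…,n}`, with `Xᵢ` as the hom from
`i-1` to `i` and the initial object elsewhere. -/
def seq {n : ℕ} (Xs : Fin n → V) : EGraph V where
  obj := ULift.{v} (Fin (n + 1))
  hom i j := if h : (i.down : ℕ) + 1 = (j.down : ℕ) ∧ (i.down : ℕ) < n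
    then Xs ⟨i.down, h.2⟩ else ⊥_ V

/-- The functor `T̄ₙ` associated to a functor over `Set`. -/
def Tbar (T : EGraph V ⥤ EGraph W) (hT : OverSet T) {n : ℕ} (Xs : Fin n → V) : W :=
  (T.obj (seq Xs)).hom (cast (hT.1 _).symm (ULift.up 0))
    (cast (hT.1 _).symm (ULift.up (Fin.last n)))

/-- The identity-on-objects morphism of sequence graphs induced by a family of maps. -/
def seqHom {n : ℕ} {Xs Ys : Fin n → V} (g : ∀ i, Xs i ⟶ Ys i) : seq Xs ⟶ seq Ys where
  f := _root_.id
  φ a b :=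
    if h : (a.down : ℕ) + 1 = (b.down : ℕ) ∧ (a.down : ℕ) < n then
      eqToHom (dif_pos h) ≫ g ⟨a.down, h.2⟩ ≫
        eqToHom (show Ys ⟨a.down, h.2⟩ = (seq Ys).hom (_root_.id a) (_root_.id b) by
          simp only [seq, id_eq]
          exact (dif_pos (c := ((a.down : ℕ) + 1 = (b.down : ℕ) ∧ (a.down : ℕ) < n))
            (t := fun h' => Ys ⟨a.down, h'.2⟩) (e := fun _ => ⊥_ V) h).symm)
    else eqToHom (show (seq Xs).hom a b = (seq Ys).hom (_root_.id a) (_root_.id b) by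
      simp only [seq, id_eq]
      exact (dif_neg (c := ((a.down : ℕ) + 1 = (b.down : ℕ) ∧ (a.down : ℕ) < n))
        (t := fun h' => Xs ⟨a.down, h'.2⟩) (e := fun _ => ⊥_ V) h).trans
        (dif_neg (c := ((a.down : ℕ) + 1 = (b.down : ℕ) ∧ (a.down : ℕ) < n))
        (t := fun h' => Ys ⟨a.down, h'.2⟩) (e := fun _ => ⊥_ V) h).symm)

/-- The family of maps `update Xs i₀ A ⟶ update Xs i₀ B` which is `g` in
position `i₀` and the identity elsewhere. -/
def updHom {n : ℕ} (Xs : Fin n → V) (i₀ : Fin n) {A B : V} (g : A ⟶ B) :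
    ∀ i, Function.update Xs i₀ A i ⟶ Function.update Xs i₀ B i := fun i =>
  if h : i = i₀ then
    eqToHom (by rw [h, Function.update_self]) ≫ g ≫
      eqToHom (by rw [h, Function.update_self])
  else eqToHom (by rw [Function.update_of_ne h, Function.update_of_ne h])

/-- A functor over `Set` between categories of enriched graphs is *distributive* when
each `T̄ₙ` preserves coproducts in each variable. -/
def Distributive (T : EGraph V ⥤ EGraph W) (hT : OverSet T) : Prop :=
  ∀ (n : ℕ) (i₀ : Fin n) (Xs : Fin n → V) {J : Type v} (Y : J → V)
    (c : Cofan Y) (_ : IsColimit c),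
    Nonempty (IsColimit (Cofan.mk (Tbar T hT (Function.update Xs i₀ c.pt))
      (fun j =>
        (T.map (seqHom (updHom Xs i₀ (c.inj j)))).φ (cast (hT.1 _).symm (ULift.up 0))
            (cast (hT.1 _).symm (ULift.up (Fin.last n))) ≫
          eqToHom (by erw [map_f_eq T hT, map_f_eq T hT]; dsimp only [seqHom, Tbar, id_eq]; rfl))))

/-- The morphism `x̄ : (X(x₀,x₁),…,X(x_{n-1},xₙ)) ⟶ X` associated to a path of
objects of `X`. -/
def pathHom {X : EGraph V} {n : ℕ} (x : Fin (n + 1) → X.obj) :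
    seq (fun i : Fin n => X.hom (x i.castSucc) (x i.succ)) ⟶ X where
  f p := x p.down
  φ a b :=
    if h : (a.down : ℕ) + 1 = (b.down : ℕ) ∧ (a.down : ℕ) < n then
      eqToHom (by
        dsimp only [seq]
        rw [dif_pos h]
        exact congrArg₂ X.hom (congrArg x (Fin.ext (by simp)))
          (congrArg x (Fin.ext (by simpa using h.1))))
    else eqToHom (dif_neg h) ≫ initial.to _

/-- Index type for the paths from `a` to `b` in the graph `X`. -/
def PathIdx (X : EGraph V) (a b : X.obj) : Type v :=
  Σ n : ℕ, { x : Fin (n + 1) → X.obj // x 0 = a ∧ x (Fin.last n) = b }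

/-- A functor over `Set` between categories of enriched graphs is *path-like* when the
canonical maps `∐ T̄ᵢ X(x_{i-1},xᵢ) ⟶ TX(a,b)` are isomorphisms (i.e. exhibit
`TX(a,b)` as the coproduct). -/
def PathLike (T : EGraph V ⥤ EGraph W) (hT : OverSet T) : Prop :=
  ∀ (X : EGraph V) (a b : X.obj),
    Nonempty (IsColimit (Cofan.mk
      ((T.obj X).hom (cast (hT.1 X).symm a) (cast (hT.1 X).symm b))
      (fun p : PathIdx X a b =>
        (T.map (pathHom p.2.1)).φ (cast (hT.1 _).symm (ULift.up 0))
            (cast (hT.1 _).symm (ULift.up (Fin.last p.1))) ≫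
          eqToHom (by
            erw [map_f_eq T hT, map_f_eq T hT]
            exact congrArg₂ _ (congrArg _ p.2.2.1) (congrArg _ p.2.2.2)))))

end
end EGraph

namespace EGraph

variable {V : Type u} [Category.{v} V] {W : Type w} [Category.{v} W]

@[simp] theorem id_f' (X : EGraph V) : (𝟙 X : X ⟶ X).f = _root_.id := rfl
@[simp] theorem id_phi' (X : EGraph V) (a b : X.obj) : (𝟙 X : X ⟶ X).φ a b = 𝟙 _ := rfl
@[simp] theorem comp_f' {X Y Z : EGraph V} (F : X ⟶ Y) (G : Y ⟶ Z) :
    (F ≫ G).f = G.f ∘ F.f := rfl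
@[simp] theorem comp_phi' {X Y Z : EGraph V} (F : X ⟶ Y) (G : Y ⟶ Z) (a b : X.obj) :
    (F ≫ G).φ a b = F.φ a b ≫ G.φ (F.f a) (F.f b) := rfl

theorem phi_eq {X Y : EGraph V} (F : X ⟶ Y) {p p' q q' : X.obj} (hp : p = p') (hq : q = q') :
    F.φ p q = eqToHom (by rw [hp, hq]) ≫ F.φ p' q' ≫ eqToHom (by rw [hp, hq]) := by
  subst hp; subst hq; simp

theorem phi_eq_of_hom_eq {X Y : EGraph V} {F G : X ⟶ Y} (h : F = G) (p q : X.obj) :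
    F.φ p q = G.φ p q ≫ eqToHom (by rw [h]) := by subst h; simp

theorem homext {X Y : EGraph V} {F G : X ⟶ Y} (h : ∀ p, F.f p = G.f p)
    (h2 : ∀ p q, F.φ p q ≫ eqToHom (by rw [h p, h q]) = G.φ p q) : F = G := by
  obtain ⟨f, φ⟩ := F; obtain ⟨g, ψ⟩ := G
  obtain rfl : f = g := funext h
  suffices hφ : φ = ψ by rw [hφ]
  funext p q
  simpa using h2 p q

set_option linter.unusedSectionVars false

noncomputable section Aux
variable [HasInitial V] [HasInitial W] [HasColimits W]
variable {J : Type v} [Category.{v} J]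
variable (F : J ⥤ (EGraph V ⥤ EGraph W)) (hobj : ∀ j : J, OverSet (F.obj j))
variable (hmap : ∀ {j j' : J} (d : j ⟶ j') (X : EGraph V),
      HEq ((F.map d).app X).f (_root_.id : X.obj → X.obj))

/-- The canonical cast into the object set of `(F.obj j).obj X`. -/
def cst (j : J) (X : EGraph V) (p : X.obj) : ((F.obj j).obj X).obj :=
  cast ((hobj j).1 X).symm p

include hmap in
theorem mapd_f {j j' : J} (d : j ⟶ j') (X : EGraph V) (p : X.obj) :
    ((F.map d).app X).f (cst F hobj j X p) = cst F hobj j' X p := by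
  rw [cast_apply_heq ((hobj j).1 X) ((hobj j').1 X) (hmap d X)]
  simp [cst]

theorem Fmap_f (j : J) {X Y : EGraph V} (G : X ⟶ Y) (p : X.obj) :
    ((F.obj j).map G).f (cst F hobj j X p) = cst F hobj j Y (G.f p) :=
  map_f_eq _ (hobj j) G p

/-- The `J`-diagram of hom objects. -/
@[simps, reducible] def D (X : EGraph V) (a b : X.obj) : J ⥤ W where
  obj j := ((F.obj j).obj X).hom (cst F hobj j X a) (cst F hobj j X b)
  map {j j'} d := ((F.map d).app X).φ _ _ ≫
    eqToHom (by rw [mapd_f F hobj hmap d X a, mapd_f F hobj hmap d X b])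
  map_id j := by
    rw [phi_eq_of_hom_eq (show (F.map (𝟙 j)).app X = 𝟙 ((F.obj j).obj X) by
      rw [F.map_id]; rfl)]
    simp
  map_comp {j j' j''} d e := by
    rw [phi_eq_of_hom_eq (show (F.map (d ≫ e)).app X =
      (F.map d).app X ≫ (F.map e).app X by rw [F.map_comp]; rfl)]
    simp only [comp_phi', Category.assoc]
    rw [phi_eq ((F.map e).app X) (mapd_f F hobj hmap d X a) (mapd_f F hobj hmap d X b)]
    simp

theorem cst_cast (j : J) (X : EGraph V) (p : ((F.obj j).obj X).obj) :
    cst F hobj j X (cast ((hobj j).1 X) p) = p := by simp [cst]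

include hmap in
theorem ι_congr (X : EGraph V) {a a' b b' : X.obj} (ha : a = a') (hb : b = b') (j : J) :
    colimit.ι (D F hobj hmap X a b) j =
      eqToHom (by rw [ha, hb]) ≫ colimit.ι (D F hobj hmap X a' b') j ≫
        eqToHom (by rw [ha, hb]) := by
  subst ha; subst hb; simp

/-- The diagram map induced by a graph morphism. -/
@[simps, reducible] def Dnat {X Y : EGraph V} (G : X ⟶ Y) (a b : X.obj) :
    D F hobj hmap X a b ⟶ D F hobj hmap Y (G.f a) (G.f b) where
  app j := ((F.obj j).map G).φ _ _ ≫
    eqToHom (by rw [Fmap_f F hobj j G a, Fmap_f F hobj j G b])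
  naturality {j j'} d := by
    dsimp only [D]
    have hnat := phi_eq_of_hom_eq ((F.map d).naturality G)
      (cst F hobj j X a) (cst F hobj j X b)
    simp only [comp_phi'] at hnat
    rw [phi_eq ((F.obj j').map G) (mapd_f F hobj hmap d X a).symm
          (mapd_f F hobj hmap d X b).symm,
        phi_eq ((F.map d).app Y) (Fmap_f F hobj j G a).symm (Fmap_f F hobj j G b).symm]
    simp only [Category.assoc, eqToHom_trans_assoc, eqToHom_refl, Category.id_comp]
    rw [reassoc_of% hnat]
    simp

/-- The colimit functor `K`. -/
@[simps, reducible] def K : EGraph V ⥤ EGraph W where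
  obj X := ⟨X.obj, fun a b => colimit (D F hobj hmap X a b)⟩
  map {X Y} G := ⟨G.f, fun a b => colimMap (Dnat F hobj hmap G a b)⟩
  map_id X := Hom.ext' rfl (heq_of_eq (by
    funext a b
    refine colimit.hom_ext fun j => ?_
    rw [ι_colimMap]
    dsimp only [Dnat]
    rw [phi_eq_of_hom_eq ((F.obj j).map_id X)]
    simp))
  map_comp {X Y Z} G H := Hom.ext' rfl (heq_of_eq (by
    funext a b
    refine colimit.hom_ext fun j => ?_
    rw [ι_colimMap]
    dsimp only [Dnat]
    rw [phi_eq_of_hom_eq ((F.obj j).map_comp G H)]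
    simp only [comp_phi', Category.assoc]
    rw [phi_eq ((F.obj j).map H) (Fmap_f F hobj j G a) (Fmap_f F hobj j G b)]
    simp))

theorem K_overSet : OverSet (K F hobj hmap) :=
  ⟨fun _ => rfl, fun _ => HEq.rfl⟩

theorem Fmap_f' (j : J) {X Y : EGraph V} (G : X ⟶ Y) (p : ((F.obj j).obj X).obj) :
    cast ((hobj j).1 Y) (((F.obj j).map G).f p) = G.f (cast ((hobj j).1 X) p) := by
  have h := Fmap_f F hobj j G (cast ((hobj j).1 X) p)
  rw [cst_cast] at h
  rw [h]; simp [cst]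

include hmap in
theorem mapd_f' {j j' : J} (d : j ⟶ j') (X : EGraph V) (p : ((F.obj j).obj X).obj) :
    cast ((hobj j').1 X) (((F.map d).app X).f p) = cast ((hobj j).1 X) p := by
  have h := mapd_f F hobj hmap d X (cast ((hobj j).1 X) p)
  rw [cst_cast] at h
  rw [h]; simp [cst]

theorem K_map_phi {X Y : EGraph V} (G : X ⟶ Y) (a b : X.obj) :
    ((K F hobj hmap).map G).φ a b = colimMap (Dnat F hobj hmap G a b) := rfl

/-- The component of the cocone injection at `j` and `X`. -/
@[reducible] def cocApp (j : J) (X : EGraph V) : (F.obj j).obj X ⟶ (K F hobj hmap).obj X :=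
  ⟨fun p => cast ((hobj j).1 X) p, fun p q =>
    eqToHom (show ((F.obj j).obj X).hom p q =
        ((F.obj j).obj X).hom (cst F hobj j X (cast ((hobj j).1 X) p))
          (cst F hobj j X (cast ((hobj j).1 X) q)) by
      rw [cst_cast, cst_cast]) ≫
      colimit.ι (D F hobj hmap X _ _) j⟩

theorem cocApp_f (j : J) (X : EGraph V) (p : ((F.obj j).obj X).obj) :
    (cocApp F hobj hmap j X).f p = cast ((hobj j).1 X) p := rfl

theorem cocApp_phi (j : J) (X : EGraph V) (p q : ((F.obj j).obj X).obj) :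
    (cocApp F hobj hmap j X).φ p q =
      eqToHom (show ((F.obj j).obj X).hom p q =
          ((F.obj j).obj X).hom (cst F hobj j X (cast ((hobj j).1 X) p))
            (cst F hobj j X (cast ((hobj j).1 X) q)) by
        rw [cst_cast, cst_cast]) ≫
        colimit.ι (D F hobj hmap X (cast ((hobj j).1 X) p) (cast ((hobj j).1 X) q)) j :=
  rfl

theorem coc_nat1 (j : J) {X Y : EGraph V} (G : X ⟶ Y) :
    (F.obj j).map G ≫ cocApp F hobj hmap j Y =
      cocApp F hobj hmap j X ≫ (K F hobj hmap).map G := by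
  refine homext (fun p => Fmap_f' F hobj j G p) (fun p q => ?_)
  simp only [comp_phi', comp_f', cocApp_f, cocApp_phi, K_map_phi, Category.assoc,
    ι_colimMap, Dnat_app]
  rw [ι_congr F hobj hmap Y (Fmap_f' F hobj j G p) (Fmap_f' F hobj j G q) j,
    phi_eq ((F.obj j).map G) (cst_cast F hobj j X p) (cst_cast F hobj j X q)]
  simp

theorem coc_nat2 {j j' : J} (d : j ⟶ j') (X : EGraph V) :
    (F.map d).app X ≫ cocApp F hobj hmap j' X = cocApp F hobj hmap j X := by
  refine homext (fun p => mapd_f' F hobj hmap d X p) (fun p q => ?_)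
  simp only [comp_phi', comp_f', cocApp_f, cocApp_phi, Category.assoc]
  rw [ι_congr F hobj hmap X (mapd_f' F hobj hmap d X p)
        (mapd_f' F hobj hmap d X q) j',
    phi_eq ((F.map d).app X) (cst_cast F hobj j X p).symm
      (cst_cast F hobj j X q).symm]
  simp only [Category.assoc, eqToHom_trans_assoc, eqToHom_refl,
    Category.id_comp, Category.comp_id, eqToHom_trans]
  rw [← colimit.w (D F hobj hmap X (cast ((hobj j).1 X) p)
        (cast ((hobj j).1 X) q)) d]
  dsimp only [D]
  simp

/-- The colimiting cocone over `F` with point `K`. -/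
def coc : Cocone F where
  pt := K F hobj hmap
  ι :=
    { app := fun j =>
        { app := fun X => cocApp F hobj hmap j X
          naturality := fun {X Y} G => coc_nat1 F hobj hmap j G }
      naturality := fun {j j'} d => by
        ext X : 2
        simp only [NatTrans.comp_app, Functor.const_obj_obj, Functor.const_obj_map,
          NatTrans.id_app, Category.comp_id]
        exact coc_nat2 F hobj hmap d X }

theorem cast_cst (j : J) (X : EGraph V) (p : X.obj) :
    cast ((hobj j).1 X) (cst F hobj j X p) = p := by simp [cst]

section Colim
variable [IsConnected J] (s : Cocone F)

/-- Object part of the components of a cocone `s`. -/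
def gf (X : EGraph V) (j : J) (p : X.obj) : (s.pt.obj X).obj :=
  ((s.ι.app j).app X).f (cst F hobj j X p)

include hmap in
theorem gf_const (X : EGraph V) (j j' : J) : gf F hobj s X j = gf F hobj s X j' := by
  refine constant_of_preserves_morphisms _ (fun j₁ j₂ d => funext fun p => ?_) j j'
  have h : (s.ι.app j₁).app X = (F.map d).app X ≫ (s.ι.app j₂).app X := by
    rw [← s.w d]; rfl
  show ((s.ι.app j₁).app X).f (cst F hobj j₁ X p) = _
  rw [h]
  show ((s.ι.app j₂).app X).f (((F.map d).app X).f (cst F hobj j₁ X p)) = _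
  rw [mapd_f F hobj hmap d X p]
  rfl

/-- The cocone over `D` induced by a cocone `s` over `F`. -/
@[reducible] def Ecoc (X : EGraph V) (a b : X.obj) : Cocone (D F hobj hmap X a b) where
  pt := (s.pt.obj X).hom (gf F hobj s X (Classical.arbitrary J) a)
    (gf F hobj s X (Classical.arbitrary J) b)
  ι :=
    { app := fun j => ((s.ι.app j).app X).φ (cst F hobj j X a) (cst F hobj j X b) ≫
        eqToHom (by
          rw [show ((s.ι.app j).app X).f (cst F hobj j X a) =
                gf F hobj s X (Classical.arbitrary J) a from
              congrFun (gf_const F hobj hmap s X j _) a,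
            show ((s.ι.app j).app X).f (cst F hobj j X b) =
                gf F hobj s X (Classical.arbitrary J) b from
              congrFun (gf_const F hobj hmap s X j _) b]; rfl)
      naturality := fun {j j'} d => by
        dsimp only [D, Functor.const_obj_obj, Functor.const_obj_map]
        rw [Category.comp_id]
        rw [phi_eq_of_hom_eq (show (s.ι.app j).app X =
            (F.map d).app X ≫ (s.ι.app j').app X by rw [← s.w d]; rfl)
          (cst F hobj j X a) (cst F hobj j X b)]
        simp only [comp_phi', Category.assoc]
        rw [phi_eq ((s.ι.app j').app X) (mapd_f F hobj hmap d X a)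
          (mapd_f F hobj hmap d X b)]
        simp }

theorem Ecoc_app (X : EGraph V) (a b : X.obj) (j : J) :
    (Ecoc F hobj hmap s X a b).ι.app j =
      ((s.ι.app j).app X).φ (cst F hobj j X a) (cst F hobj j X b) ≫
        eqToHom (by
          rw [show ((s.ι.app j).app X).f (cst F hobj j X a) =
                gf F hobj s X (Classical.arbitrary J) a from
              congrFun (gf_const F hobj hmap s X j _) a,
            show ((s.ι.app j).app X).f (cst F hobj j X b) =
                gf F hobj s X (Classical.arbitrary J) b from
              congrFun (gf_const F hobj hmap s X j _) b]; rfl) := rfl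

/-- Component of the descent morphism. -/
@[reducible] def descApp (X : EGraph V) : (K F hobj hmap).obj X ⟶ s.pt.obj X :=
  ⟨fun p => gf F hobj s X (Classical.arbitrary J) p,
   fun a b => colimit.desc (D F hobj hmap X a b) (Ecoc F hobj hmap s X a b)⟩

theorem descApp_f (X : EGraph V) (p : X.obj) :
    (descApp F hobj hmap s X).f p = gf F hobj s X (Classical.arbitrary J) p := rfl

theorem descApp_phi (X : EGraph V) (a b : X.obj) :
    (descApp F hobj hmap s X).φ a b =
      colimit.desc (D F hobj hmap X a b) (Ecoc F hobj hmap s X a b) := rfl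

theorem gf_map {X Y : EGraph V} (G : X ⟶ Y) (j : J) (p : X.obj) :
    (s.pt.map G).f (gf F hobj s X j p) = gf F hobj s Y j (G.f p) := by
  have h2 := congrArg (fun (H : (F.obj j).obj X ⟶ s.pt.obj Y) =>
    H.f (cst F hobj j X p)) ((s.ι.app j).naturality G)
  simp only [comp_f', Function.comp_apply] at h2
  rw [Fmap_f F hobj j G p] at h2
  exact h2.symm

theorem desc_nat {X Y : EGraph V} (G : X ⟶ Y) :
    (K F hobj hmap).map G ≫ descApp F hobj hmap s Y =
      descApp F hobj hmap s X ≫ s.pt.map G := by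
  refine homext (fun p => (gf_map F hobj s G _ p).symm) (fun p q => ?_)
  simp only [comp_phi', comp_f', K_map_phi, K_map_f, descApp_phi, descApp_f]
  refine colimit.hom_ext fun j => ?_
  simp only [K_map_f, ι_colimMap_assoc, Dnat_app, colimit.ι_desc, colimit.ι_desc_assoc,
    Category.assoc, Ecoc_app]
  have h2 := phi_eq_of_hom_eq ((s.ι.app j).naturality G)
    (cst F hobj j X p) (cst F hobj j X q)
  simp only [comp_phi'] at h2
  rw [phi_eq ((s.ι.app j).app Y) (Fmap_f F hobj j G p).symm (Fmap_f F hobj j G q).symm,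
    phi_eq (s.pt.map G) (congrFun (gf_const F hobj hmap s X (Classical.arbitrary J) j) p)
      (congrFun (gf_const F hobj hmap s X (Classical.arbitrary J) j) q)]
  simp only [Category.assoc, eqToHom_trans_assoc, eqToHom_refl, Category.id_comp]
  rw [reassoc_of% h2]
  simp only [Category.assoc, eqToHom_trans_assoc, eqToHom_refl, Category.id_comp,
    Functor.const_obj_obj, Functor.const_obj_map, eqToHom_trans]
  dsimp only [gf]
  simp

theorem fac_lem (j : J) (X : EGraph V) :
    cocApp F hobj hmap j X ≫ descApp F hobj hmap s X = (s.ι.app j).app X := by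
  refine homext (fun p => ?_) (fun p q => ?_)
  · show gf F hobj s X (Classical.arbitrary J) (cast ((hobj j).1 X) p) = _
    rw [congrFun (gf_const F hobj hmap s X (Classical.arbitrary J) j) _]
    show ((s.ι.app j).app X).f (cst F hobj j X (cast ((hobj j).1 X) p)) = _
    rw [cst_cast]
  · simp only [comp_phi', comp_f', cocApp_phi, cocApp_f, descApp_phi, Category.assoc,
      colimit.ι_desc, Ecoc_app]
    rw [phi_eq ((s.ι.app j).app X) (cst_cast F hobj j X p) (cst_cast F hobj j X q)]
    simp

theorem uniq_lem (X : EGraph V) (mX : (K F hobj hmap).obj X ⟶ s.pt.obj X)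
    (hmX : ∀ j, cocApp F hobj hmap j X ≫ mX = (s.ι.app j).app X) :
    mX = descApp F hobj hmap s X := by
  have hf : ∀ p, mX.f p = gf F hobj s X (Classical.arbitrary J) p := fun p => by
    have h := congrArg
      (fun (H : (F.obj (Classical.arbitrary J)).obj X ⟶ s.pt.obj X) =>
        H.f (cst F hobj (Classical.arbitrary J) X p)) (hmX (Classical.arbitrary J))
    simp only [comp_f', Function.comp_apply, cocApp_f] at h
    rw [cast_cst] at h
    exact h
  refine homext hf (fun a b => ?_)
  refine colimit.hom_ext fun j => ?_
  rw [descApp_phi, colimit.ι_desc, Ecoc_app]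
  have h2 := phi_eq_of_hom_eq (hmX j) (cst F hobj j X a) (cst F hobj j X b)
  simp only [comp_phi', comp_f', Function.comp_apply, cocApp_phi, cocApp_f] at h2
  rw [phi_eq mX (cast_cst F hobj j X a) (cast_cst F hobj j X b),
    ι_congr F hobj hmap X (cast_cst F hobj j X a) (cast_cst F hobj j X b) j]
    at h2
  simp only [Category.assoc, eqToHom_trans_assoc, eqToHom_refl, Category.id_comp,
    eqToHom_trans] at h2
  simp only [Category.assoc]
  have pf : (s.pt.obj X).hom (mX.f (cast ((hobj j).1 X) (cst F hobj j X a)))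
      (mX.f (cast ((hobj j).1 X) (cst F hobj j X b))) =
      (s.pt.obj X).hom (gf F hobj s X (Classical.arbitrary J) a)
        (gf F hobj s X (Classical.arbitrary J) b) := by
    rw [cast_cst, cast_cst, hf a, hf b]
  have h3 := congrArg (fun t => t ≫ eqToHom pf) h2
  simp only [Category.assoc, eqToHom_trans] at h3
  exact h3

/-- The colimit structure. -/
def isColim : IsColimit (coc F hobj hmap) where
  desc s :=
    { app := fun X => descApp F hobj hmap s X
      naturality := fun {X Y} G => desc_nat F hobj hmap s G }
  fac s j := by
    ext X : 2
    exact fac_lem F hobj hmap s j X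
  uniq s m hm := by
    ext X : 2
    refine uniq_lem F hobj hmap s X (m.app X) (fun j => ?_)
    have h := congrArg (fun (η : F.obj j ⟶ s.pt) => η.app X) (hm j)
    exact h

end Colim

section Key
variable [IsConnected J]
variable {I : Type v} {S : I → EGraph V} {X : EGraph V} (m : ∀ i, S i ⟶ X)
  (u : ∀ i, (S i).obj) (v : ∀ i, (S i).obj) {a b : X.obj}
  (hu : ∀ i, (m i).f (u i) = a) (hv : ∀ i, (m i).f (v i) = b)
  (hJ : ∀ j : J, IsColimit (Cofan.mk
    (((F.obj j).obj X).hom (cst F hobj j X a) (cst F hobj j X b))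
    (fun i => ((F.obj j).map (m i)).φ (cst F hobj j (S i) (u i))
        (cst F hobj j (S i) (v i)) ≫
      eqToHom (by rw [Fmap_f F hobj j (m i) (u i), Fmap_f F hobj j (m i) (v i),
        hu i, hv i]))))

/-- The cocone over `D X a b` induced by a cofan `t`. -/
@[reducible] def keyCocone (t : Cofan fun i => colimit (D F hobj hmap (S i) (u i) (v i))) :
    Cocone (D F hobj hmap X a b) where
  pt := t.pt
  ι :=
    { app := fun j => Cofan.IsColimit.desc (hJ j)
        (fun i => colimit.ι (D F hobj hmap (S i) (u i) (v i)) j ≫ t.inj i)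
      naturality := fun {j j'} d => by
        simp only [Functor.const_obj_obj, Functor.const_obj_map, Category.comp_id]
        refine Cofan.IsColimit.hom_ext (hJ j) _ _ fun i => ?_
        rw [Cofan.IsColimit.fac (hJ j)]
        have hfac := Cofan.IsColimit.fac (hJ j')
          (fun i => colimit.ι (D F hobj hmap (S i) (u i) (v i)) j' ≫ t.inj i) i
        simp only [Cofan.mk_pt, Cofan.mk_ι_app, Cofan.inj, Category.assoc] at hfac
        simp only [Cofan.mk_pt, Cofan.mk_ι_app, Cofan.inj, Category.assoc, D_map]
        have h2 := phi_eq_of_hom_eq ((F.map d).naturality (m i))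
          (cst F hobj j (S i) (u i)) (cst F hobj j (S i) (v i))
        simp only [comp_phi'] at h2
        rw [phi_eq ((F.map d).app X)
            (show ((F.obj j).map (m i)).f (cst F hobj j (S i) (u i)) =
                cst F hobj j X a by rw [Fmap_f, hu i]).symm
            (show ((F.obj j).map (m i)).f (cst F hobj j (S i) (v i)) =
                cst F hobj j X b by rw [Fmap_f, hv i]).symm]
        simp only [Category.assoc, eqToHom_trans_assoc, eqToHom_refl, Category.id_comp]
        rw [reassoc_of% h2]
        rw [phi_eq ((F.obj j').map (m i)) (mapd_f F hobj hmap d (S i) (u i))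
            (mapd_f F hobj hmap d (S i) (v i))]
        simp only [Category.assoc, eqToHom_trans_assoc, eqToHom_refl, Category.id_comp,
          eqToHom_trans]
        rw [hfac]
        rw [← colimit.w (D F hobj hmap (S i) (u i) (v i)) d]
        simp only [D_map, Category.assoc] }

include hJ in
theorem key :
    Nonempty (IsColimit (Cofan.mk
      (((K F hobj hmap).obj X).hom a b)
      (fun i => ((K F hobj hmap).map (m i)).φ (u i) (v i) ≫
        eqToHom (by rw [show ((K F hobj hmap).map (m i)).f (u i) = a from hu i,
          show ((K F hobj hmap).map (m i)).f (v i) = b from hv i])))) := by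
  constructor
  refine mkCofanColimit _
    (fun t => colimit.desc (D F hobj hmap X a b)
      (keyCocone F hobj hmap m u v hu hv hJ t)) (fun t i => ?_) (fun t w hw => ?_)
  · -- fac
    simp only [Cofan.mk_pt, Cofan.mk_ι_app, Cofan.inj, K_map_phi, Category.assoc]
    refine colimit.hom_ext (F := D F hobj hmap (S i) (u i) (v i)) fun j => ?_
    simp only [ι_colimMap_assoc, Dnat_app, Category.assoc]
    rw [ι_congr F hobj hmap X (hu i) (hv i) j]
    simp only [Category.assoc, eqToHom_trans_assoc, eqToHom_refl, Category.id_comp,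
      eqToHom_trans, colimit.ι_desc]
    show _ ≫ eqToHom _ ≫ Cofan.IsColimit.desc (hJ j) _ = _
    rw [← Category.assoc]
    exact Cofan.IsColimit.fac (hJ j) _ i
  · -- uniq
    refine colimit.hom_ext (F := D F hobj hmap X a b) fun j => ?_
    rw [colimit.ι_desc]
    show colimit.ι (D F hobj hmap X a b) j ≫ w =
      Cofan.IsColimit.desc (hJ j) _
    refine Cofan.IsColimit.hom_ext (hJ j) _ _ fun i => ?_
    rw [Cofan.IsColimit.fac]
    have hwi := hw i
    simp only [Cofan.mk_pt, Cofan.mk_ι_app, Cofan.inj, K_map_phi] at hwi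
    have h3 := congrArg (fun t => colimit.ι (D F hobj hmap (S i) (u i) (v i)) j ≫ t) hwi
    simp only [ι_colimMap_assoc, Dnat_app, Category.assoc] at h3
    rw [ι_congr F hobj hmap X (hu i) (hv i) j] at h3
    simp only [Category.assoc, eqToHom_trans_assoc, eqToHom_refl, Category.id_comp,
      eqToHom_trans] at h3
    rw [← Category.assoc] at h3
    simp only [Cofan.mk_pt, Cofan.mk_ι_app, Cofan.inj, Category.assoc] at h3 ⊢
    exact h3

end Key

theorem cast_heq_id {α β : Type v} (h : α = β) :
    HEq (fun p : α => cast h p) (_root_.id : β → β) := by subst h; rfl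

end Aux

/-- Let `V` and `W` be categories with coproducts, `W` cocomplete,
`J` a small connected category, and `F : J ⥤ [GV, GW]` a functor sending objects and
arrows of `J` to functors and natural transformations over `Set`.  Then the colimit `K`
of `F` may be chosen to be over `Set` (with colimit cocone whose components are
identities on objects); moreover if each `F j` is path-like then `K` is path-like, and
if each `F j` is distributive then `K` is distributive. -/
theorem colimit_overSet_pathLike_distributive
    [HasInitial V] [HasInitial W] [HasCoproducts.{v} V] [HasColimits W]
    {J : Type v} [Category.{v} J] [IsConnected J]
    (F : J ⥤ (EGraph V ⥤ EGraph W))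
    (hobj : ∀ j : J, OverSet (F.obj j))
    (hmap : ∀ {j j' : J} (d : j ⟶ j') (X : EGraph V),
      HEq ((F.map d).app X).f (_root_.id : X.obj → X.obj)) :
    ∃ c : Limits.Cocone F, Nonempty (Limits.IsColimit c) ∧
      ∃ hc : OverSet c.pt,
        (∀ (j : J) (X : EGraph V),
          HEq ((c.ι.app j).app X).f (_root_.id : X.obj → X.obj)) ∧
        ((∀ j : J, PathLike (F.obj j) (hobj j)) → PathLike c.pt hc) ∧
        ((∀ j : J, Distributive (F.obj j) (hobj j)) → Distributive c.pt hc) := by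
  refine ⟨coc F hobj hmap, ⟨isColim F hobj hmap⟩, K_overSet F hobj hmap,
    fun j X => cast_heq_id ((hobj j).1 X), fun hPL X a b => ?_, fun hD => ?_⟩
  · exact key F hobj hmap (fun p : PathIdx X a b => pathHom p.2.1)
      (fun p => ULift.up 0) (fun p => ULift.up (Fin.last p.1))
      (fun p => p.2.2.1) (fun p => p.2.2.2) (fun j => (hPL j X a b).some)
  · intro n i₀ Xs J' Y c hc'
    exact key F hobj hmap (fun i => seqHom (updHom Xs i₀ (c.inj i)))
      (fun _ => ULift.up 0) (fun _ => ULift.up (Fin.last n))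
      (fun _ => rfl) (fun _ => rfl) (fun j => (hD j n i₀ Xs Y c hc').some)

end EGraph
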